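/- Let λ ∈ (0,1]. A function μ : [0,∞) → [0,λ) is an MT(λ)-function if and only if for every nonincreasing sequence {x_n} in [0,∞), sup_n μ(x_n) < λ. -/

import Mathlib

open Filter Set Topology

/-- `MTfun φ`: φ is an MT-function, i.e. `limsup_{s→t⁺} φ(s) < 1` for all `t ≥ 0`. -/
def MTfun (φ : ℝ → ℝ) : Prop :=
  ∀ t : ℝ, 0 ≤ t → Filter.limsup φ (nhdsWithin t (Set.Ioi t)) < 1

/-- `MTlfun λ μ`: μ is an MT(λ)-function, i.e. `limsup_{s→t⁺} μ(s) < λ` for all `t ≥ 0`. -/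
def MTlfun (l : ℝ) (μ : ℝ → ℝ) : Prop :=
  ∀ t : ℝ, 0 ≤ t → Filter.limsup μ (nhdsWithin t (Set.Ioi t)) < l

private noncomputable def mySeq (μ : ℝ → ℝ) (l t : ℝ)
    (key : ∀ (n : ℕ) (b : ℝ), t < b → ∃ s, t < s ∧ s < b ∧ l - 1/((n:ℝ)+1) < μ s) :
    (n : ℕ) → {p : ℝ // t < p ∧ l - 1/((n:ℝ)+1) < μ p}
  | 0 => ⟨(key 0 (t+1) (by linarith)).choose,
      (key 0 (t+1) (by linarith)).choose_spec.1,
      (key 0 (t+1) (by linarith)).choose_spec.2.2⟩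
  | n+1 =>
      ⟨(key (n+1) (mySeq μ l t key n).1 (mySeq μ l t key n).2.1).choose,
       (key (n+1) (mySeq μ l t key n).1 (mySeq μ l t key n).2.1).choose_spec.1,
       (key (n+1) (mySeq μ l t key n).1 (mySeq μ l t key n).2.1).choose_spec.2.2⟩

private lemma mySeq_lt (μ : ℝ → ℝ) (l t : ℝ)
    (key : ∀ (n : ℕ) (b : ℝ), t < b → ∃ s, t < s ∧ s < b ∧ l - 1/((n:ℝ)+1) < μ s)
    (n : ℕ) : (mySeq μ l t key (n+1)).1 < (mySeq μ l t key n).1 :=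
  (key (n+1) (mySeq μ l t key n).1 (mySeq μ l t key n).2.1).choose_spec.2.1

theorem stmt_15 (l : ℝ) (hl : 0 < l ∧ l ≤ 1) (μ : ℝ → ℝ)
    (hmap : ∀ t : ℝ, 0 ≤ t → 0 ≤ μ t ∧ μ t < l) :
    MTlfun l μ ↔ ∀ x : ℕ → ℝ, (∀ n, 0 ≤ x n) → (∀ n, x (n + 1) ≤ x n) →
      (⨆ n, μ (x n)) < l := by
  constructor
  · intro hM x hx0 hxdec
    set t := ⨅ n, x n with ht
    have hbdd : BddBelow (range x) := ⟨0, by rintro _ ⟨n, rfl⟩; exact hx0 n⟩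
    have hti : ∀ n, t ≤ x n := fun n => ciInf_le hbdd n
    have ht0 : 0 ≤ t := le_ciInf hx0
    have htend : Tendsto x atTop (𝓝 t) :=
      tendsto_atTop_ciInf (antitone_nat_of_succ_le hxdec) hbdd
    have hls := hM t ht0
    set c := (limsup μ (𝓝[>] t) + l)/2 with hc
    have hc1 : limsup μ (𝓝[>] t) < c := by rw [hc]; linarith
    have hc2 : c < l := by rw [hc]; linarith
    have hevl : ∀ᶠ s in 𝓝[>] t, μ s ≤ l := by
      filter_upwards [eventually_mem_nhdsWithin] with s hs
      exact (hmap s (ht0.trans hs.le)).2.le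
    have hbdda : IsBoundedUnder (· ≤ ·) (𝓝[>] t) μ := ⟨l, eventually_map.2 hevl⟩
    have hev : ∀ᶠ s in 𝓝[>] t, μ s < c := eventually_lt_of_limsup_lt hc1 hbdda
    obtain ⟨b, hb, hIoo⟩ := (nhdsGT_basis t).eventually_iff.mp hev
    have hevb : ∀ᶠ n in atTop, x n < b := htend.eventually_lt_const hb
    obtain ⟨N, hN⟩ := eventually_atTop.mp hevb
    have hne : (Finset.range (N+1)).Nonempty := ⟨0, by simp⟩
    set M := max c (max (μ t) ((Finset.range (N+1)).sup' hne (fun n => μ (x n)))) with hMdef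
    have hMl : M < l := by
      apply max_lt hc2 (max_lt (hmap t ht0).2 _)
      rw [Finset.sup'_lt_iff]
      intro n _
      exact (hmap (x n) (hx0 n)).2
    have hub : ∀ n, μ (x n) ≤ M := by
      intro n
      rcases le_or_gt n N with hn | hn
      · exact le_trans
          (Finset.le_sup' (fun m => μ (x m)) (Finset.mem_range.mpr (Nat.lt_succ_of_le hn)))
          (le_trans (le_max_right _ _) (le_max_right _ _))
      · have hxb := hN n hn.le
        rcases eq_or_lt_of_le (hti n) with he | hlt
        · rw [← he]
          exact le_trans (le_max_left _ _) (le_max_right _ _)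
        · exact (hIoo ⟨hlt, hxb⟩).le.trans (le_max_left _ _)
    exact lt_of_le_of_lt (ciSup_le hub) hMl
  · intro h t ht0
    by_contra hcon
    push_neg at hcon
    have hev0 : ∀ᶠ s in 𝓝[>] t, 0 ≤ μ s := by
      filter_upwards [eventually_mem_nhdsWithin] with s hs
      exact (hmap s (ht0.trans hs.le)).1
    have hcob : IsCoboundedUnder (· ≤ ·) (𝓝[>] t) μ :=
      IsBoundedUnder.isCoboundedUnder_le ⟨0, eventually_map.2 hev0⟩
    have key : ∀ (n : ℕ) (b : ℝ), t < b → ∃ s, t < s ∧ s < b ∧ l - 1/((n:ℝ)+1) < μ s := by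
      intro n b hb
      have hfreq : ∃ᶠ s in 𝓝[>] t, l - 1/((n:ℝ)+1) < μ s := by
        by_contra hcon2
        rw [not_frequently] at hcon2
        have hevn : ∀ᶠ s in 𝓝[>] t, μ s ≤ l - 1/((n:ℝ)+1) :=
          hcon2.mono fun s hs => not_lt.mp hs
        have hlim := limsup_le_of_le hcob hevn
        have h1n : 0 < 1/((n:ℝ)+1) := by positivity
        linarith
      have hmem : Ioo t b ∈ 𝓝[>] t := Ioo_mem_nhdsGT_of_mem ⟨le_refl t, hb⟩
      obtain ⟨s, hs1, hs2⟩ :=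
        (hfreq.and_eventually (eventually_of_mem hmem fun _ hx => hx)).exists
      exact ⟨s, hs2.1, hs2.2, hs1⟩
    set x : ℕ → ℝ := fun n => (mySeq μ l t key n).1 with hx
    have hx0 : ∀ n, 0 ≤ x n := fun n => (ht0.trans_lt (mySeq μ l t key n).2.1).le
    have hxdec : ∀ n, x (n+1) ≤ x n := fun n => (mySeq_lt μ l t key n).le
    have hsup := h x hx0 hxdec
    have hbddA : BddAbove (range fun n => μ (x n)) :=
      ⟨l, by rintro _ ⟨n, rfl⟩; exact (hmap (x n) (hx0 n)).2.le⟩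
    have hle : ∀ n : ℕ, l - 1/((n:ℝ)+1) ≤ ⨆ m, μ (x m) := fun n =>
      le_trans (mySeq μ l t key n).2.2.le (le_ciSup hbddA n)
    have hfin : l ≤ ⨆ m, μ (x m) := by
      have htd : Tendsto (fun n : ℕ => l - 1/((n:ℝ)+1)) atTop (𝓝 l) := by
        have h0 := tendsto_one_div_add_atTop_nhds_zero_nat (𝕜 := ℝ)
        simpa using tendsto_const_nhds.sub h0
      exact le_of_tendsto' htd hle
    linarith
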